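/- arXiv:2212.01198 — 3 statements merged into one kernel-verified Lean document; each statement's English description precedes it below -/
import Mathlib

section
/- If κ is a regular cardinal with κ^{<κ} = κ and μ ≤ 2^κ, then the Cohen forcing Add(κ, μ) (partial functions from κ × μ to 2 of size < κ, ordered by reverse inclusion) is strongly κ-centered. -/
universe u

/-- A condition of Cohen forcing `Add(κ, μ)`: a partial function from `κ × μ`
(represented by `α × β` with `#α = κ`, `#β = μ`) to `2` whose domain has size `< κ`. -/
structure CohenCond (α β : Type u) (κ : Cardinal.{u}) : Type u where
  toFun : α × β → Option Bool
  small : Cardinal.mk {x : α × β // toFun x ≠ none} < κ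

/-- The order on Cohen conditions: reverse inclusion of partial functions. -/
def CohenLe {α β : Type u} {κ : Cardinal.{u}} (p q : CohenCond α β κ) : Prop :=
  ∀ x b, q.toFun x = some b → p.toFun x = some b

open Cardinal Set

namespace CohenAux

open Classical in
noncomputable def extFun {α : Type u} (A : Set α) (t : A → Bool) : α → Bool :=
  fun x => if h : x ∈ A then t ⟨x, h⟩ else false

lemma extFun_apply {α : Type u} (A : Set α) (t : A → Bool) (x : α) (hx : x ∈ A) :
    extFun A t x = t ⟨x, hx⟩ := dif_pos hx

structure PreColor (α : Type u) : Type u where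
  A : Set α
  H : α × (α → Bool) → Option Bool

def IsColor {α : Type u} (κ : Cardinal.{u}) (c : PreColor α) : Prop :=
  #(c.A) < κ ∧
  (∀ a s s', (∀ x ∈ c.A, s x = s' x) → c.H (a, s) = c.H (a, s')) ∧
  #{y : α × (c.A → Bool) // c.H (y.1, extFun c.A y.2) ≠ none} < κ

def Good {α β : Type u} {κ : Cardinal.{u}} (e : β → α → Bool)
    (p : CohenCond α β κ) (c : PreColor α) : Prop :=
  ∀ a b v, p.toFun (a, b) = some v → c.H (a, e b) = some v

theorem mk_small_subsets_le {α : Type u} {κ : Cardinal.{u}}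
    (hκα : Cardinal.mk α = κ) (hreg : κ.IsRegular) (hpow : κ ^< κ = κ) :
    #{s : Set α // #s < κ} ≤ κ := by
  obtain ⟨r, wo, hr⟩ := Cardinal.ord_eq α
  have hcof : Ordinal.cof (Ordinal.type r) = κ := by
    rw [← hr, hκα, hreg.cof_eq]
  calc #{s : Set α // #s < κ} ≤ #{s : Set α // Set.Bounded r s} := by
        apply mk_le_mk_of_subset
        intro s hs
        have hsup : (⨆ x : s, Order.succ (Ordinal.typein r x.1)) < Ordinal.type r := by
          rw [← hr, hκα]
          refine Cardinal.iSup_lt_ord_of_isRegular hreg hs (fun x => ?_)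
          refine (Cardinal.isSuccLimit_ord hreg.aleph0_le).succ_lt ?_
          rw [← hκα, hr]; exact Ordinal.typein_lt_type r x.1
        show ∃ a, ∀ b ∈ s, r b a
        refine ⟨Ordinal.enum r ⟨_, hsup⟩, fun b hb => ?_⟩
        rw [← Ordinal.typein_lt_typein r, Ordinal.typein_enum]
        exact (Order.lt_succ _).trans_le
          (Ordinal.le_iSup (fun x : s => Order.succ (Ordinal.typein r x.1)) ⟨b, hb⟩)
    _ ≤ κ := by
        have : { s : Set α | Set.Bounded r s } = ⋃ i, 𝒫{ j | r j i } := setOf_exists _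
        rw [← coe_setOf, this]
        refine mk_iUnion_le_sum_mk.trans ?_
        refine (sum_le_sum _ (fun _ => κ) ?_).trans ?_
        · intro i
          rw [mk_powerset]
          have h1 : #{ j | r j i } < κ := by
            have hr' : κ.ord = Ordinal.type r := by rw [← hκα]; exact hr
            rw [coe_setOf, ← Ordinal.card_typein, ← Cardinal.lt_ord, hr']
            apply Ordinal.typein_lt_type
          calc (2 : Cardinal) ^ #{ j | r j i } ≤ κ ^ #{ j | r j i } :=
                power_le_power_right (hreg.aleph0_le.trans' (by exact_mod_cast le_of_lt (nat_lt_aleph0 2)))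
            _ ≤ κ ^< κ := le_powerlt κ h1
            _ = κ := hpow
        · rw [sum_const', hκα]
          exact (mul_eq_self hreg.aleph0_le).le

lemma exists_color {α β : Type u} {κ : Cardinal.{u}} [Nonempty α] (hreg : κ.IsRegular)
    (e : β → α → Bool) (he : Function.Injective e) (p : CohenCond α β κ) :
    ∃ c : PreColor α, IsColor κ c ∧ Good e p c := by
  classical
  have hd : ∀ b b' : β, b ≠ b' → ∃ x, e b x ≠ e b' x := by
    intro b b' hbb
    by_contra h
    push_neg at h
    exact hbb (he (funext h))
  set supp : Set β := {b | ∃ a, p.toFun (a, b) ≠ none} with hsupp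
  have hsuppSmall : #supp < κ := by
    have : ∀ b : supp, ∃ a, p.toFun (a, b.1) ≠ none := fun b => b.2
    choose g hg using this
    refine lt_of_le_of_lt (mk_le_of_injective (f := fun b : supp =>
      (⟨(g b, b.1), hg b⟩ : {x : α × β // p.toFun x ≠ none})) ?_) p.small
    intro b b' hbb
    ext
    exact congrArg (fun z => z.1.2) hbb
  set dp : supp × supp → α := fun z =>
    if h : z.1.1 ≠ z.2.1 then (hd _ _ h).choose else Classical.arbitrary α with hdp
  set A : Set α := {a | ∃ b, p.toFun (a, b) ≠ none} ∪ range dp with hA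
  have hAsmall : #A < κ := by
    refine lt_of_le_of_lt (mk_union_le _ _) (add_lt_of_lt hreg.aleph0_le ?_ ?_)
    · have : {a | ∃ b, p.toFun (a, b) ≠ none} =
          Prod.fst '' {x : α × β | p.toFun x ≠ none} := by
        ext a
        constructor
        · rintro ⟨b, hb⟩; exact ⟨(a, b), hb, rfl⟩
        · rintro ⟨x, hx, rfl⟩; exact ⟨x.2, hx⟩
      rw [this]
      exact lt_of_le_of_lt mk_image_le p.small
    · refine lt_of_le_of_lt mk_range_le ?_
      simpa only [mk_prod, lift_id] using mul_lt_of_lt hreg.aleph0_le hsuppSmall hsuppSmall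
  have hsep : ∀ b b', b ∈ supp → b' ∈ supp → (∀ x ∈ A, e b x = e b' x) → b = b' := by
    intro b b' hb hb' hagree
    by_contra hbb
    have hx : dp (⟨b, hb⟩, ⟨b', hb'⟩) ∈ A := Or.inr (mem_range_self _)
    have : dp (⟨b, hb⟩, ⟨b', hb'⟩) = (hd b b' hbb).choose := by
      simp only [hdp, dif_pos (by exact hbb : (b:β) ≠ b')]
    rw [this] at hx
    exact (hd b b' hbb).choose_spec (hagree _ hx)
  set H : α × (α → Bool) → Option Bool := fun y =>
    if h : ∃ b, b ∈ supp ∧ (∀ x ∈ A, e b x = y.2 x) ∧ p.toFun (y.1, b) ≠ none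
    then p.toFun (y.1, h.choose) else none with hH
  have hHpos : ∀ a (s : α → Bool) b v, b ∈ supp → (∀ x ∈ A, e b x = s x) →
      p.toFun (a, b) = some v → H (a, s) = some v := by
    intro a s b v hb hag hpv
    have hex : ∃ b', b' ∈ supp ∧ (∀ x ∈ A, e b' x = s x) ∧ p.toFun (a, b') ≠ none :=
      ⟨b, hb, hag, by simp [hpv]⟩
    have hcb := hex.choose_spec
    have : hex.choose = b := by
      refine hsep _ _ hcb.1 hb ?_
      intro x hx
      rw [hcb.2.1 x hx, hag x hx]
    simp only [hH, dif_pos hex, this, hpv]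
  refine ⟨⟨A, H⟩, ⟨hAsmall, ?_, ?_⟩, ?_⟩
  · -- invariance
    intro a s s' hss
    show H (a, s) = H (a, s')
    simp only at hss
    by_cases h : ∃ b, b ∈ supp ∧ (∀ x ∈ A, e b x = s x) ∧ p.toFun (a, b) ≠ none
    · obtain ⟨b, hb, hag, hne⟩ := h
      obtain ⟨v, hv⟩ := Option.ne_none_iff_exists'.1 hne
      rw [hHpos a s b v hb hag hv, hHpos a s' b v hb (fun x hx => (hag x hx).trans (hss x hx)) hv]
    · have h' : ¬ ∃ b, b ∈ supp ∧ (∀ x ∈ A, e b x = s' x) ∧ p.toFun (a, b) ≠ none := by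
        rintro ⟨b, hb, hag, hne⟩
        exact h ⟨b, hb, fun x hx => (hag x hx).trans (hss x hx).symm, hne⟩
      simp only [hH]
      rw [dif_neg h, dif_neg h']
  · -- small support
    show #{y : α × (↥A → Bool) // H (y.1, extFun A y.2) ≠ none} < κ
    have key : ∀ y : {y : α × (↥A → Bool) // H (y.1, extFun A y.2) ≠ none},
        ∃ b, b ∈ supp ∧ (∀ x ∈ A, e b x = extFun A y.1.2 x) ∧
          p.toFun (y.1.1, b) ≠ none := by
      intro y
      by_contra h
      refine y.2 ?_
      simp only [hH]
      exact dif_neg h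
    choose bb hbb1 hbb2 hbb3 using key
    refine lt_of_le_of_lt (mk_le_of_injective
      (f := fun y : {y : α × (↥A → Bool) // H (y.1, extFun A y.2) ≠ none} =>
      (⟨(y.1.1, bb y), hbb3 y⟩ : {x : α × β // p.toFun x ≠ none})) ?_) p.small
    intro y y' hyy
    have ha : y.1.1 = y'.1.1 := congrArg (fun z => z.1.1) hyy
    have hb : bb y = bb y' := congrArg (fun z => z.1.2) hyy
    apply Subtype.ext
    apply Prod.ext ha
    funext x
    have h1 := hbb2 y x.1 x.2
    have h2 := hbb2 y' x.1 x.2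
    rw [← hb] at h2
    rw [extFun_apply A _ x.1 x.2] at h1 h2
    rw [← h1, ← h2]
  · -- Good
    intro a b v hpv
    exact hHpos a (e b) b v ⟨a, by simp [hpv]⟩ (fun x _ => rfl) hpv

lemma mk_colors_le {α : Type u} {κ : Cardinal.{u}}
    (hκα : #α = κ) (hreg : κ.IsRegular) (hpow : κ ^< κ = κ) :
    #{c : PreColor α // IsColor κ c} ≤ κ := by
  classical
  set Z := α ⊕ (α × {T : Set α // #T < κ} × Bool) with hZdef
  set Y : PreColor α → Set (α × {T : Set α // #T < κ} × Bool) := fun c =>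
    {y | ∃ s : α → Bool, c.H (y.1, s) = some y.2.2 ∧
      (y.2.1 : Set α) = {x | x ∈ c.A ∧ s x = true}} with hY
  set Φ : {c : PreColor α // IsColor κ c} → Set Z := fun c =>
    Sum.inl '' c.1.A ∪ Sum.inr '' Y c.1 with hΦ
  -- membership characterizations
  have memA : ∀ (c : {c : PreColor α // IsColor κ c}) (x : α),
      Sum.inl x ∈ Φ c ↔ x ∈ c.1.A := by
    intro c x
    constructor
    · rintro (⟨x', hx', heq⟩ | ⟨y, _, hy⟩)
      · cases heq; exact hx'
      · cases hy
    · intro hx; exact Or.inl ⟨x, hx, rfl⟩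
  have memY : ∀ (c : {c : PreColor α // IsColor κ c}) y,
      Sum.inr y ∈ Φ c ↔ y ∈ Y c.1 := by
    intro c y
    constructor
    · rintro (⟨x', _, hx⟩ | ⟨y', hy', heq⟩)
      · cases hx
      · cases heq; exact hy'
    · intro hy; exact Or.inr ⟨y, hy, rfl⟩
  have keysome : ∀ (c : {c : PreColor α // IsColor κ c}) (a : α) (s : α → Bool) (v : Bool)
      (T : {T : Set α // #T < κ}), (T : Set α) = {x | x ∈ c.1.A ∧ s x = true} →
      (c.1.H (a, s) = some v ↔ Sum.inr (a, T, v) ∈ Φ c) := by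
    intro c a s v T hT
    rw [memY]
    constructor
    · intro h
      exact ⟨s, h, hT⟩
    · rintro ⟨s', hs', hT'⟩
      rw [← hs']
      refine c.2.2.1 a s s' ?_
      intro x hx
      have hset : {x | x ∈ c.1.A ∧ s x = true} = {x | x ∈ c.1.A ∧ s' x = true} := by
        rw [← hT, hT']
      have hmem := Set.ext_iff.1 hset x
      simp only [mem_setOf_eq] at hmem
      have h1 : s x = true ↔ s' x = true :=
        ⟨fun h => (hmem.1 ⟨hx, h⟩).2, fun h => (hmem.2 ⟨hx, h⟩).2⟩
      cases hsx : s x <;> cases hsx' : s' x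
      · rfl
      · rw [hsx, hsx'] at h1; exact absurd (h1.2 rfl) (by simp)
      · rw [hsx, hsx'] at h1; exact absurd (h1.1 rfl) (by simp)
      · rfl
  -- injectivity
  have hinj : Function.Injective Φ := by
    intro c₁ c₂ h
    have hA : c₁.1.A = c₂.1.A := by
      ext x
      rw [← memA c₁ x, ← memA c₂ x, h]
    apply Subtype.ext
    obtain ⟨⟨A₁, H₁⟩, hc₁⟩ := c₁
    obtain ⟨⟨A₂, H₂⟩, hc₂⟩ := c₂
    simp only at hA
    subst hA
    simp only [PreColor.mk.injEq, true_and]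
    funext y
    obtain ⟨a, s⟩ := y
    have hTpf : #({x | x ∈ A₁ ∧ s x = true} : Set α) < κ := by
      refine lt_of_le_of_lt (mk_le_mk_of_subset ?_) hc₁.1
      intro x hx; exact hx.1
    set T : {T : Set α // #T < κ} := ⟨{x | x ∈ A₁ ∧ s x = true}, hTpf⟩ with hT
    have e1 := fun v => keysome ⟨⟨A₁, H₁⟩, hc₁⟩ a s v T rfl
    have e2 := fun v => keysome ⟨⟨A₁, H₂⟩, hc₂⟩ a s v T rfl
    cases h₁ : H₁ (a, s) with
    | some v =>
      exact ((e2 v).2 (h ▸ (e1 v).1 h₁)).symm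
    | none =>
      cases h₂ : H₂ (a, s) with
      | some v =>
        have h3 := (e1 v).2 (h ▸ (e2 v).1 h₂)
        change H₁ (a, s) = some v at h3
        rw [h₁] at h3; cases h3
      | none => rfl
  -- smallness of images
  have hsmall : ∀ c : {c : PreColor α // IsColor κ c}, #(Φ c) < κ := by
    intro c
    refine lt_of_le_of_lt (mk_union_le _ _) (add_lt_of_lt hreg.aleph0_le ?_ ?_)
    · exact lt_of_le_of_lt mk_image_le c.2.1
    · refine lt_of_le_of_lt mk_image_le ?_
      have hsub : Y c.1 ⊆ range (fun y : {y : α × (↥c.1.A → Bool) //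
          c.1.H (y.1, extFun c.1.A y.2) ≠ none} =>
          ((y.1.1, ⟨{x | x ∈ c.1.A ∧ extFun c.1.A y.1.2 x = true},
            lt_of_le_of_lt (mk_le_mk_of_subset fun x hx => hx.1) c.2.1⟩,
            (c.1.H (y.1.1, extFun c.1.A y.1.2)).getD false) :
            α × {T : Set α // #T < κ} × Bool)) := by
        rintro ⟨a, T, v⟩ ⟨s, hs, hT⟩
        set t : ↥c.1.A → Bool := fun x => s x.1 with ht
        have hag : c.1.H (a, extFun c.1.A t) = c.1.H (a, s) := by
          refine c.2.2.1 a _ s ?_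
          intro x hx
          rw [extFun_apply c.1.A t x hx]
        refine ⟨⟨(a, t), by rw [hag, hs]; simp⟩, ?_⟩
        simp only
        refine Prod.ext rfl (Prod.ext ?_ ?_)
        · apply Subtype.ext
          simp only
          rw [hT]
          ext x
          simp only [mem_setOf_eq, and_congr_right_iff]
          intro hx
          rw [extFun_apply c.1.A t x hx]
        · simp only [hag, hs, Option.getD_some]
      refine lt_of_le_of_lt (mk_le_mk_of_subset hsub) ?_
      exact lt_of_le_of_lt mk_range_le c.2.2.2
  -- assemble
  have h1 : #{c : PreColor α // IsColor κ c} ≤ #{S : Set Z // #S < κ} :=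
    mk_le_of_injective (f := fun c => (⟨Φ c, hsmall c⟩ : {S : Set Z // #S < κ}))
      (fun c₁ c₂ h => hinj (congrArg Subtype.val h))
  refine h1.trans ?_
  have hZ : #Z ≤ κ := by
    have hsub : #{T : Set α // #T < κ} ≤ κ := mk_small_subsets_le hκα hreg hpow
    rw [hZdef]
    simp only [mk_sum, mk_prod, lift_id, lift_uzero, mk_bool, lift_two]
    calc #α + #α * (#{T : Set α // #T < κ} * 2) ≤ κ + κ * (κ * 2) := by
          refine add_le_add hκα.le (mul_le_mul' hκα.le (mul_le_mul' hsub le_rfl))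
      _ = κ := by
          have h2 : κ * 2 = κ := by
            rw [mul_comm, two_mul, add_eq_self hreg.aleph0_le]
          rw [h2, mul_eq_self hreg.aleph0_le, add_eq_self hreg.aleph0_le]
  obtain ⟨uZ⟩ := (Cardinal.le_def Z α).1 (by rw [hκα]; exact hZ)
  have h2 : #{S : Set Z // #S < κ} ≤ #{S : Set α // #S < κ} := by
    refine mk_le_of_injective (f := fun S => (⟨uZ '' S.1,
      lt_of_le_of_lt mk_image_le S.2⟩ : {S : Set α // #S < κ})) ?_
    intro S S' h
    apply Subtype.ext
    exact (Set.image_injective.2 uZ.injective) (congrArg Subtype.val h)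
  exact h2.trans (mk_small_subsets_le hκα hreg hpow)

end CohenAux

open CohenAux in
/-- If `κ` is regular with `κ^{<κ} = κ` and `μ ≤ 2^κ`, then `Add(κ, μ)` is strongly
`κ`-centered: it can be partitioned into `κ` many cells such that finitely many
conditions lying in a common cell always have a common lower bound in that cell. -/
theorem cohen_stronglyCentered {α β : Type u} (κ : Cardinal.{u})
    (hκα : Cardinal.mk α = κ) (hreg : κ.IsRegular) (hpow : κ ^< κ = κ)
    (hμ : Cardinal.mk β ≤ 2 ^ κ) :
    ∃ (ι : Type u) (f : CohenCond α β κ → ι), Cardinal.mk ι = κ ∧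
      ∀ (ν : ι) (s : Finset (CohenCond α β κ)), s.Nonempty → (∀ p ∈ s, f p = ν) →
        ∃ q, f q = ν ∧ ∀ p ∈ s, CohenLe q p := by
  classical
  have hℵ : ℵ₀ ≤ κ := hreg.aleph0_le
  have hne : Nonempty α := by
    rw [← mk_ne_zero_iff, hκα]
    exact (lt_of_lt_of_le aleph0_pos hℵ).ne'
  have hμ' : #β ≤ #(α → Bool) := by
    have harrow : #(α → Bool) = 2 ^ κ := by
      rw [mk_arrow, mk_bool, lift_two, lift_uzero, hκα]
    rwa [harrow]
  obtain ⟨e⟩ := (Cardinal.le_def β (α → Bool)).1 hμ'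
  set C := {c : PreColor α // IsColor κ c} with hC
  have hCκ : #C ≤ #α := by rw [hκα]; exact mk_colors_le hκα hreg hpow
  obtain ⟨j⟩ := (Cardinal.le_def C α).1 hCκ
  have wf : WellFounded (@WellOrderingRel C) := IsWellFounded.wf
  have hSne : ∀ p : CohenCond α β κ, {c : C | Good e p c.1}.Nonempty := by
    intro p
    obtain ⟨c, hc1, hc2⟩ := exists_color hreg e e.injective p
    exact ⟨⟨c, hc1⟩, hc2⟩
  set fC : CohenCond α β κ → C := fun p => wf.min {c : C | Good e p c.1} (hSne p) with hfC
  have hmin_mem : ∀ p, Good e p (fC p).1 := fun p => wf.min_mem _ (hSne p)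
  have hmin_not : ∀ p (c : C), Good e p c.1 → ¬ WellOrderingRel c (fC p) :=
    fun p c hc => wf.not_lt_min _ hc
  refine ⟨α, fun p => j (fC p), hκα, ?_⟩
  intro ν s hs hall
  obtain ⟨p₀, hp₀⟩ := hs
  set c₀ : C := fC p₀ with hc₀
  have hallC : ∀ p ∈ s, fC p = c₀ := by
    intro p hp
    exact j.injective ((hall p hp).trans (hall p₀ hp₀).symm)
  -- define the union condition
  have qsmall : #{x : α × β // (fun x => if ∃ p ∈ s, p.toFun x ≠ none
      then c₀.1.H (x.1, e x.2) else none) x ≠ none} < κ := by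
    have hsub : {x : α × β | (if ∃ p ∈ s, p.toFun x ≠ none
        then c₀.1.H (x.1, e x.2) else none) ≠ none} ⊆
        ⋃ (p : ↥(s : Set (CohenCond α β κ))), {x : α × β | p.1.toFun x ≠ none} := by
      intro x hx
      simp only [mem_setOf_eq] at hx
      by_cases h : ∃ p ∈ s, p.toFun x ≠ none
      · obtain ⟨p, hp, hpx⟩ := h
        exact mem_iUnion.2 ⟨⟨p, hp⟩, hpx⟩
      · rw [if_neg h] at hx
        exact absurd rfl hx
    refine lt_of_le_of_lt (mk_le_mk_of_subset hsub) ?_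
    refine lt_of_le_of_lt mk_iUnion_le_sum_mk ?_
    refine sum_lt_of_isRegular hreg ?_ ?_
    · exact lt_of_lt_of_le (s.finite_toSet.lt_aleph0) hℵ
    · intro p
      exact p.1.small
  set q : CohenCond α β κ := ⟨fun x => if ∃ p ∈ s, p.toFun x ≠ none
      then c₀.1.H (x.1, e x.2) else none, qsmall⟩ with hq
  have hGoodq : Good e q c₀.1 := by
    intro a b v hv
    simp only [hq] at hv
    by_cases h : ∃ p ∈ s, p.toFun (a, b) ≠ none
    · rwa [if_pos h] at hv
    · rw [if_neg h] at hv; cases hv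
  have hle : ∀ p ∈ s, CohenLe q p := by
    intro p hp x v hpx
    obtain ⟨a, b⟩ := x
    have hGp : Good e p c₀.1 := by
      rw [← hallC p hp]
      exact hmin_mem p
    have hH := hGp a b v hpx
    show (if ∃ p ∈ s, p.toFun (a, b) ≠ none then c₀.1.H (a, e b) else none) = some v
    rw [if_pos ⟨p, hp, by simp [hpx]⟩]
    exact hH
  refine ⟨q, ?_, hle⟩
  have hfCq : fC q = c₀ := by
    have h1 : ¬ WellOrderingRel c₀ (fC q) := hmin_not q c₀ hGoodq
    have h2 : Good e p₀ (fC q).1 := by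
      intro a b v hv
      exact hmin_mem q a b v (hle p₀ hp₀ (a, b) v hv)
    have h3 : ¬ WellOrderingRel (fC q) c₀ := hmin_not p₀ (fC q) h2
    rcases trichotomous_of WellOrderingRel (fC q) c₀ with h | h | h
    · exact absurd h h3
    · exact h
    · exact absurd h h1
  show j (fC q) = ν
  rw [hfCq]
  exact hall p₀ hp₀
end

section
/- Fast function forcing tails are highly closed: if γ ≤ μ are inaccessible, then the posets F_{[γ,μ)} and F_{(γ,μ)} (fast function forcing with domain restricted to [γ,μ), respectively (γ,μ)) are γ^+-directed closed. -/
universe u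

/-- The ordinal `o` is an inaccessible cardinal. -/
def IsInaccOrd (o : Ordinal.{u}) : Prop :=
  o.card.IsInaccessible ∧ o = o.card.ord

/-- A condition of (a restricted version of) Woodin's fast function forcing at `μ`:
a partial function, with domain contained in `D` (consisting of inaccessibles) and
values below `hi`, of size `< μ`, such that `p[γ] ⊆ γ` and `|p ↾ γ| < γ` for every
`γ` in its domain. -/
structure FFCond (D : Set Ordinal.{u}) (hi : Ordinal.{u}) (μ : Cardinal.{u}) :
    Type (u + 1) where
  toFun : Ordinal.{u} → Option Ordinal.{u}
  dom_sub : ∀ o, toFun o ≠ none → o ∈ D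
  dom_inacc : ∀ o, toFun o ≠ none → IsInaccOrd o
  ran_lt : ∀ o v, toFun o = some v → v < hi
  below : ∀ γ, toFun γ ≠ none → ∀ x v, x < γ → toFun x = some v → v < γ
  small : Cardinal.mk {o : Ordinal.{u} // toFun o ≠ none} < Cardinal.lift.{u + 1} μ
  loc : ∀ γ, toFun γ ≠ none →
    Cardinal.mk {x : Ordinal.{u} // x < γ ∧ toFun x ≠ none} < Cardinal.lift.{u + 1} γ.card

/-- Fast function conditions are ordered by reverse inclusion. -/
instance {D : Set Ordinal.{u}} {hi : Ordinal.{u}} {μ : Cardinal.{u}} :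
    Preorder (FFCond D hi μ) where
  le p q := ∀ o v, q.toFun o = some v → p.toFun o = some v
  le_refl _ _ _ h := h
  le_trans _ _ _ hab hbc o v h := hab o v (hbc o v h)

/-- A poset is `γ⁺`-directed closed: every directed subset of size `≤ γ` has a
lower bound. -/
def DirClosed (P : Type (u + 1)) [Preorder P] (γ : Cardinal.{u}) : Prop :=
  ∀ S : Set P, Cardinal.mk S ≤ Cardinal.lift.{u + 1} γ →
    (∀ a ∈ S, ∀ b ∈ S, ∃ c ∈ S, c ≤ a ∧ c ≤ b) → ∃ l : P, ∀ a ∈ S, l ≤ a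

/-- Lifting preserves regularity. -/
theorem FF.lift_isRegular {c : Cardinal.{u}} (h : c.IsRegular) :
    (Cardinal.lift.{v} c).IsRegular :=
  ⟨Cardinal.aleph0_le_lift.2 h.1,
   by rw [← Cardinal.lift_ord, ← Ordinal.lift_cof]; exact Cardinal.lift_le.2 h.2⟩

/-- The everywhere-undefined condition. -/
def FF.botCond (D : Set Ordinal.{u}) (hi : Ordinal.{u}) (μ : Cardinal.{u}) (hμ : 0 < μ) :
    FFCond D hi μ where
  toFun _ := none
  dom_sub _ h := absurd rfl h
  dom_inacc _ h := absurd rfl h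
  ran_lt _ v h := by simp at h
  below γ h := absurd rfl h
  small := by
    haveI : IsEmpty {o : Ordinal.{u} // (none : Option Ordinal.{u}) ≠ none} :=
      ⟨fun x => x.2 rfl⟩
    rw [Cardinal.mk_eq_zero]
    have h0 : Cardinal.lift.{u + 1, u} 0 < Cardinal.lift.{u + 1, u} μ := Cardinal.lift_lt.2 hμ
    simpa using h0
  loc γ h := absurd rfl h

/-- The main closure lemma, for any domain set contained in `[γ.ord, μ.ord)`. -/
theorem FF.aux_dirClosed (γ μ : Cardinal.{u}) (hγ : γ.IsInaccessible)
    (hμ : μ.IsInaccessible) (hlt : γ < μ) (D : Set Ordinal.{u})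
    (hD : D ⊆ Set.Ico γ.ord μ.ord) : DirClosed (FFCond D μ.ord μ) γ := by
  classical
  intro S hS hdir
  -- any two elements of `S` agree wherever both are defined
  have compat : ∀ p ∈ S, ∀ q ∈ S, ∀ o v w,
      FFCond.toFun p o = some v → FFCond.toFun q o = some w → v = w := by
    intro p hp q hq o v w hpv hqw
    obtain ⟨c, _hc, hcp, hcq⟩ := hdir p hp q hq
    have h1 := hcp o v hpv
    have h2 := hcq o w hqw
    rw [h1] at h2
    exact Option.some_inj.1 h2
  -- the union of the conditions in `S`
  set f : Ordinal.{u} → Option Ordinal.{u} := fun o =>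
    if h : ∃ p : S, FFCond.toFun (p : FFCond D μ.ord μ) o ≠ none then
      FFCond.toFun (h.choose : FFCond D μ.ord μ) o
    else none with hfdef
  have hext : ∀ p ∈ S, ∀ o v, FFCond.toFun p o = some v → f o = some v := by
    intro p hp o v hpv
    have hex : ∃ q : S, FFCond.toFun (q : FFCond D μ.ord μ) o ≠ none :=
      ⟨⟨p, hp⟩, by rw [hpv]; exact Option.some_ne_none v⟩
    have hfo : f o = FFCond.toFun (hex.choose : FFCond D μ.ord μ) o := dif_pos hex
    obtain ⟨w, hw⟩ := Option.ne_none_iff_exists'.1 hex.choose_spec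
    have hvw : w = v :=
      compat (hex.choose : FFCond D μ.ord μ) hex.choose.2 p hp o w v hw hpv
    rw [hfo, hw, hvw]
  have hwit : ∀ o, f o ≠ none → ∃ p ∈ S, FFCond.toFun p o = f o ∧ FFCond.toFun p o ≠ none := by
    intro o hne
    by_cases hex : ∃ q : S, FFCond.toFun (q : FFCond D μ.ord μ) o ≠ none
    · have hfo : f o = FFCond.toFun (hex.choose : FFCond D μ.ord μ) o := dif_pos hex
      exact ⟨hex.choose, hex.choose.2, hfo.symm, hex.choose_spec⟩
    · exact absurd (dif_neg hex) hne
  have hregμ : (Cardinal.lift.{u + 1} μ).IsRegular := FF.lift_isRegular hμ.isRegular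
  have hSlt : Cardinal.mk S < Cardinal.lift.{u + 1} μ :=
    lt_of_le_of_lt hS (Cardinal.lift_lt.2 hlt)
  -- the union is a condition
  refine ⟨⟨f, ?_, ?_, ?_, ?_, ?_, ?_⟩, ?_⟩
  · intro o ho
    obtain ⟨p, _hp, _hpo, hpne⟩ := hwit o ho
    exact p.dom_sub o hpne
  · intro o ho
    obtain ⟨p, _hp, _hpo, hpne⟩ := hwit o ho
    exact p.dom_inacc o hpne
  · intro o v hv
    have hne : f o ≠ none := by rw [hv]; exact Option.some_ne_none v
    obtain ⟨p, _hp, hpo, _hpne⟩ := hwit o hne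
    exact p.ran_lt o v (by rw [hpo, hv])
  · intro δ hδ x v hx hxv
    obtain ⟨p, hp, hpδ, hpne⟩ := hwit δ hδ
    have hne : f x ≠ none := by rw [hxv]; exact Option.some_ne_none v
    obtain ⟨q, hq, hqx, _hqne⟩ := hwit x hne
    obtain ⟨c, hc, hcp, hcq⟩ := hdir p hp q hq
    obtain ⟨w, hw⟩ := Option.ne_none_iff_exists'.1 hpne
    have hcδ : FFCond.toFun c δ ≠ none := by
      rw [hcp δ w hw]; exact Option.some_ne_none w
    have hcx : FFCond.toFun c x = some v := hcq x v (by rw [hqx, hxv])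
    exact c.below δ hcδ x v hx hcx
  · -- small
    have hsub : {o : Ordinal.{u} | f o ≠ none} ⊆
        ⋃ p : S, {o : Ordinal.{u} | FFCond.toFun (p : FFCond D μ.ord μ) o ≠ none} := by
      intro o ho
      obtain ⟨p, hp, _hpo, hpne⟩ := hwit o ho
      exact Set.mem_iUnion.2 ⟨⟨p, hp⟩, hpne⟩
    refine lt_of_le_of_lt ((Cardinal.mk_le_mk_of_subset hsub).trans
      (Cardinal.mk_iUnion_le _)) ?_
    refine Cardinal.mul_lt_of_lt hregμ.1 hSlt ?_
    exact Cardinal.iSup_lt_of_isRegular hregμ hSlt fun p =>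
      (p : FFCond D μ.ord μ).small
  · -- loc
    intro δ hδ
    obtain ⟨p, hp, _hpδ, hpne⟩ := hwit δ hδ
    have hδD : δ ∈ Set.Ico γ.ord μ.ord := hD (p.dom_sub δ hpne)
    have hδinacc : IsInaccOrd δ := p.dom_inacc δ hpne
    have hδpos : 0 < δ.card := Cardinal.aleph0_pos.trans hδinacc.1.1
    rcases eq_or_lt_of_le hδD.1 with heq | hlt'
    · -- δ = γ.ord : the relevant set is empty
      haveI hempty : IsEmpty {x : Ordinal.{u} // x < δ ∧ f x ≠ none} := by
        constructor
        rintro ⟨x, hx, hxne⟩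
        obtain ⟨q, _hq, _hqx, hqne⟩ := hwit x hxne
        have hgx := (hD (q.dom_sub x hqne)).1
        rw [← heq] at hx
        exact absurd hx (not_lt.2 hgx)
      rw [Cardinal.mk_eq_zero]
      have h0 : Cardinal.lift.{u + 1, u} 0 < Cardinal.lift.{u + 1, u} δ.card :=
        Cardinal.lift_lt.2 hδpos
      simpa using h0
    · -- γ.ord < δ, so γ < δ.card
      have hγδ : γ < δ.card := by
        rw [← Cardinal.ord_lt_ord, ← hδinacc.2]; exact hlt'
      have hregδ : (Cardinal.lift.{u + 1} δ.card).IsRegular :=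
        FF.lift_isRegular hδinacc.1.isRegular
      have hSδ : Cardinal.mk S < Cardinal.lift.{u + 1} δ.card :=
        lt_of_le_of_lt hS (Cardinal.lift_lt.2 hγδ)
      have hq_lt : ∀ q : S,
          Cardinal.mk {x : Ordinal.{u} |
            x < δ ∧ FFCond.toFun (q : FFCond D μ.ord μ) x ≠ none} <
            Cardinal.lift.{u + 1} δ.card := by
        intro q
        obtain ⟨c, _hc, hcp, hcq⟩ := hdir p hp q q.2
        obtain ⟨w, hw⟩ := Option.ne_none_iff_exists'.1 hpne
        have hcδ : FFCond.toFun c δ ≠ none := by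
          rw [hcp δ w hw]; exact Option.some_ne_none w
        refine lt_of_le_of_lt (Cardinal.mk_le_mk_of_subset ?_) (c.loc δ hcδ)
        rintro x ⟨hx, hxne⟩
        obtain ⟨v, hv⟩ := Option.ne_none_iff_exists'.1 hxne
        exact ⟨hx, by rw [hcq x v hv]; exact Option.some_ne_none v⟩
      have hsub : {x : Ordinal.{u} | x < δ ∧ f x ≠ none} ⊆
          ⋃ q : S, {x : Ordinal.{u} |
            x < δ ∧ FFCond.toFun (q : FFCond D μ.ord μ) x ≠ none} := by
        rintro x ⟨hx, hxne⟩
        obtain ⟨q, hq, _hqx, hqne⟩ := hwit x hxne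
        exact Set.mem_iUnion.2 ⟨⟨q, hq⟩, hx, hqne⟩
      refine lt_of_le_of_lt ((Cardinal.mk_le_mk_of_subset hsub).trans
        (Cardinal.mk_iUnion_le _)) ?_
      refine Cardinal.mul_lt_of_lt hregδ.1 hSδ ?_
      exact Cardinal.iSup_lt_of_isRegular hregδ hSδ hq_lt
  · -- lower bound
    intro a ha o v hv
    exact hext a ha o v hv

/-- If `γ ≤ μ` are inaccessible, then the tails `F_{[γ,μ)}` and `F_{(γ,μ)}` of
fast function forcing are `γ⁺`-directed closed. -/
theorem fastFunction_tails_directed_closed (γ μ : Cardinal.{u})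
    (hγ : γ.IsInaccessible) (hμ : μ.IsInaccessible) (hle : γ ≤ μ) :
    DirClosed (FFCond (Set.Ico γ.ord μ.ord) μ.ord μ) γ ∧
      DirClosed (FFCond (Set.Ioo γ.ord μ.ord) μ.ord μ) γ := by
  have hμpos : 0 < μ := Cardinal.aleph0_pos.trans hμ.1
  rcases eq_or_lt_of_le hle with heq | hlt
  · -- γ = μ : all conditions are trivial
    subst heq
    have trivD : ∀ D : Set Ordinal.{u}, D ⊆ Set.Ico γ.ord γ.ord →
        DirClosed (FFCond D γ.ord γ) γ := by
      intro D hD S _hS _hdir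
      refine ⟨FF.botCond D γ.ord γ hμpos, ?_⟩
      intro a _ha o v hv
      have : o ∈ Set.Ico γ.ord γ.ord :=
        hD (a.dom_sub o (by rw [hv]; exact Option.some_ne_none v))
      exact absurd this.2 (not_lt.2 this.1)
    exact ⟨trivD _ subset_rfl, trivD _ (Set.Ioo_subset_Ico_self.trans subset_rfl)⟩
  · exact ⟨FF.aux_dirClosed γ μ hγ hμ hlt _ subset_rfl,
      FF.aux_dirClosed γ μ hγ hμ hlt _ Set.Ioo_subset_Ico_self⟩
end

section
/- Fast function forcing factors below a condition: if p ∈ F_μ and γ ∈ dom(p), then setting p_0 = p ↾ γ and p_1 = p ↾ [γ, μ), we have p_0 ∈ F_γ, p_1 ∈ F_{[γ,μ)}, and the cone F_μ/p = { r ∈ F_μ : r ≤ p } is isomorphic to the product (F_γ/p_0) × (F_{[γ,μ)}/p_1). -/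
universe u

/-- Restriction of a partial function to arguments `< γ`. -/
noncomputable def restrictLT (f : Ordinal.{u} → Option Ordinal.{u}) (γ : Ordinal.{u}) :
    Ordinal.{u} → Option Ordinal.{u} :=
  fun o => if o < γ then f o else none

/-- Restriction of a partial function to arguments `≥ γ`. -/
noncomputable def restrictGE (f : Ordinal.{u} → Option Ordinal.{u}) (γ : Ordinal.{u}) :
    Ordinal.{u} → Option Ordinal.{u} :=
  fun o => if γ ≤ o then f o else none


lemma FFCond.ext' {D : Set Ordinal.{u}} {hi : Ordinal.{u}} {μ : Cardinal.{u}}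
    {p q : FFCond D hi μ} (h : p.toFun = q.toFun) : p = q := by
  cases p; cases q; cases h; rfl

lemma restrictLT_eq_some {f : Ordinal.{u} → Option Ordinal.{u}} {γ o v : Ordinal.{u}} :
    restrictLT f γ o = some v ↔ o < γ ∧ f o = some v := by
  unfold restrictLT; split <;> simp_all

lemma restrictLT_ne_none {f : Ordinal.{u} → Option Ordinal.{u}} {γ o : Ordinal.{u}} :
    restrictLT f γ o ≠ none ↔ o < γ ∧ f o ≠ none := by
  unfold restrictLT; split <;> simp_all

lemma restrictGE_eq_some {f : Ordinal.{u} → Option Ordinal.{u}} {γ o v : Ordinal.{u}} :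
    restrictGE f γ o = some v ↔ γ ≤ o ∧ f o = some v := by
  unfold restrictGE; split <;> simp_all

lemma restrictGE_ne_none {f : Ordinal.{u} → Option Ordinal.{u}} {γ o : Ordinal.{u}} :
    restrictGE f γ o ≠ none ↔ γ ≤ o ∧ f o ≠ none := by
  unfold restrictGE; split <;> simp_all

/-- restriction below γ of a condition having γ in its domain -/
noncomputable def FFCond.down (μ : Cardinal.{u}) (r : FFCond (Set.Iio μ.ord) μ.ord μ)
    (γ : Ordinal.{u}) (hγ : r.toFun γ ≠ none) : FFCond (Set.Iio γ) γ γ.card where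
  toFun := restrictLT r.toFun γ
  dom_sub o h := (restrictLT_ne_none.mp h).1
  dom_inacc o h := r.dom_inacc o (restrictLT_ne_none.mp h).2
  ran_lt o v h := by
    obtain ⟨ho, hv⟩ := restrictLT_eq_some.mp h
    exact r.below γ hγ o v ho hv
  below δ hδ x v hx h := by
    obtain ⟨hδγ, hδ'⟩ := restrictLT_ne_none.mp hδ
    exact r.below δ hδ' x v hx (restrictLT_eq_some.mp h).2
  small := by
    have := r.loc γ hγ
    refine lt_of_le_of_lt ?_ this
    exact Cardinal.mk_subtype_le_of_subset fun x hx => restrictLT_ne_none.mp hx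
  loc δ hδ := by
    obtain ⟨hδγ, hδ'⟩ := restrictLT_ne_none.mp hδ
    refine lt_of_le_of_lt ?_ (r.loc δ hδ')
    exact Cardinal.mk_subtype_le_of_subset fun x hx => ⟨hx.1, (restrictLT_ne_none.mp hx.2).2⟩

/-- restriction above γ of a condition -/
noncomputable def FFCond.up (μ : Cardinal.{u}) (γ : Ordinal.{u})
    (r : FFCond (Set.Iio μ.ord) μ.ord μ) : FFCond (Set.Ico γ μ.ord) μ.ord μ where
  toFun := restrictGE r.toFun γ
  dom_sub o h := by
    obtain ⟨ho, h'⟩ := restrictGE_ne_none.mp h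
    exact ⟨ho, r.dom_sub o h'⟩
  dom_inacc o h := r.dom_inacc o (restrictGE_ne_none.mp h).2
  ran_lt o v h := r.ran_lt o v (restrictGE_eq_some.mp h).2
  below δ hδ x v hx h :=
    r.below δ (restrictGE_ne_none.mp hδ).2 x v hx (restrictGE_eq_some.mp h).2
  small := lt_of_le_of_lt
    (Cardinal.mk_subtype_le_of_subset fun x hx => (restrictGE_ne_none.mp hx).2) r.small
  loc δ hδ := lt_of_le_of_lt
    (Cardinal.mk_subtype_le_of_subset fun x hx => ⟨hx.1, (restrictGE_ne_none.mp hx.2).2⟩)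
    (r.loc δ (restrictGE_ne_none.mp hδ).2)

noncomputable def joinFun (f g : Ordinal.{u} → Option Ordinal.{u}) (γ : Ordinal.{u}) :
    Ordinal.{u} → Option Ordinal.{u} := fun o => if o < γ then f o else g o

lemma joinFun_lt {f g : Ordinal.{u} → Option Ordinal.{u}} {γ o : Ordinal.{u}}
    (h : o < γ) : joinFun f g γ o = f o := if_pos h

lemma joinFun_ge {f g : Ordinal.{u} → Option Ordinal.{u}} {γ o : Ordinal.{u}}
    (h : γ ≤ o) : joinFun f g γ o = g o := if_neg (not_lt.mpr h)

lemma mk_split_le (P : Ordinal.{u} → Prop) (f g : Ordinal.{u} → Option Ordinal.{u})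
    (γ : Ordinal.{u})
    (hf : ∀ o, P o → o < γ → joinFun f g γ o ≠ none → f o ≠ none)
    (hg : ∀ o, P o → γ ≤ o → joinFun f g γ o ≠ none → P o ∧ g o ≠ none) :
    Cardinal.mk {o : Ordinal.{u} // P o ∧ joinFun f g γ o ≠ none} ≤
      Cardinal.mk {o : Ordinal.{u} // f o ≠ none} +
        Cardinal.mk {o : Ordinal.{u} // P o ∧ g o ≠ none} := by
  set F : {o : Ordinal.{u} // P o ∧ joinFun f g γ o ≠ none} →
      {o : Ordinal.{u} // f o ≠ none} ⊕ {o : Ordinal.{u} // P o ∧ g o ≠ none} :=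
    fun x => if h : x.1 < γ then Sum.inl ⟨x.1, hf x.1 x.2.1 h x.2.2⟩
      else Sum.inr ⟨x.1, hg x.1 x.2.1 (not_lt.mp h) x.2.2⟩ with hF
  have key : ∀ x, Sum.elim Subtype.val Subtype.val (F x) = x.1 := by
    intro x; rw [hF]; dsimp only; split <;> rfl
  have hinj : Function.Injective F := by
    intro a b h
    have := congrArg (Sum.elim Subtype.val Subtype.val) h
    rw [key, key] at this
    exact Subtype.ext this
  have := Cardinal.mk_le_of_injective hinj
  simpa [Cardinal.mk_sum] using this

/-- join of two conditions -/
noncomputable def FFCond.join (μ : Cardinal.{u}) (hμ : μ.IsInaccessible) (γ : Ordinal.{u})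
    (hγi : IsInaccOrd γ) (hγμ : γ < μ.ord)
    (q₀ : FFCond (Set.Iio γ) γ γ.card) (q₁ : FFCond (Set.Ico γ μ.ord) μ.ord μ) :
    FFCond (Set.Iio μ.ord) μ.ord μ where
  toFun := joinFun q₀.toFun q₁.toFun γ
  dom_sub o h := by
    by_cases ho : o < γ
    · exact lt_trans ho hγμ
    · rw [joinFun_ge (not_lt.mp ho)] at h
      exact (q₁.dom_sub o h).2
  dom_inacc o h := by
    by_cases ho : o < γ
    · exact q₀.dom_inacc o (by rwa [joinFun_lt ho] at h)
    · exact q₁.dom_inacc o (by rwa [joinFun_ge (not_lt.mp ho)] at h)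
  ran_lt o v h := by
    by_cases ho : o < γ
    · exact lt_trans (q₀.ran_lt o v (by rwa [joinFun_lt ho] at h)) hγμ
    · exact q₁.ran_lt o v (by rwa [joinFun_ge (not_lt.mp ho)] at h)
  below δ hδ x v hx h := by
    by_cases hδγ : δ < γ
    · have hxγ : x < γ := lt_trans hx hδγ
      rw [joinFun_lt hδγ] at hδ
      rw [joinFun_lt hxγ] at h
      exact q₀.below δ hδ x v hx h
    · rw [joinFun_ge (not_lt.mp hδγ)] at hδ
      by_cases hxγ : x < γ
      · rw [joinFun_lt hxγ] at h
        exact lt_of_lt_of_le (q₀.ran_lt x v h) (not_lt.mp hδγ)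
      · rw [joinFun_ge (not_lt.mp hxγ)] at h
        exact q₁.below δ hδ x v hx h
  small := by
    have h := mk_split_le (fun _ => True) q₀.toFun q₁.toFun γ
      (fun o _ ho hne => by rwa [joinFun_lt ho] at hne)
      (fun o _ ho hne => ⟨trivial, by rwa [joinFun_ge ho] at hne⟩)
    have h0 : Cardinal.mk {o : Ordinal.{u} // (fun _ => True) o ∧ joinFun q₀.toFun q₁.toFun γ o ≠ none}
        = Cardinal.mk {o : Ordinal.{u} // joinFun q₀.toFun q₁.toFun γ o ≠ none} :=
      Cardinal.mk_congr (Equiv.subtypeEquivRight fun x => by simp)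
    have h1 : Cardinal.mk {o : Ordinal.{u} // (fun _ => True) o ∧ q₁.toFun o ≠ none}
        = Cardinal.mk {o : Ordinal.{u} // q₁.toFun o ≠ none} :=
      Cardinal.mk_congr (Equiv.subtypeEquivRight fun x => by simp)
    rw [h0, h1] at h
    refine lt_of_le_of_lt h (Cardinal.add_lt_of_lt ?_ ?_ q₁.small)
    · have : Cardinal.aleph0.{u+1} ≤ Cardinal.lift.{u+1} μ := by
        simpa using (Cardinal.lift_le.{u+1}.mpr hμ.1.le)
      simpa using this
    · exact lt_trans q₀.small (Cardinal.lift_lt.mpr (Cardinal.lt_ord.mp hγμ))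
  loc δ hδ := by
    by_cases hδγ : δ < γ
    · rw [joinFun_lt hδγ] at hδ
      refine lt_of_le_of_lt ?_ (q₀.loc δ hδ)
      refine Cardinal.mk_subtype_le_of_subset fun x hx => ?_
      have hxγ : x < γ := lt_trans hx.1 hδγ
      exact ⟨hx.1, by rw [joinFun_lt hxγ] at hx; exact hx.2⟩
    · have hγδ : γ ≤ δ := not_lt.mp hδγ
      rw [joinFun_ge hγδ] at hδ
      have h := mk_split_le (fun x => x < δ) q₀.toFun q₁.toFun γ
        (fun o _ ho hne => by rwa [joinFun_lt ho] at hne)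
        (fun o hP ho hne => ⟨hP, by rwa [joinFun_ge ho] at hne⟩)
      refine lt_of_le_of_lt h (Cardinal.add_lt_of_lt ?_ ?_ (q₁.loc δ hδ))
      · have hδi : IsInaccOrd δ := q₁.dom_inacc δ hδ
        have : Cardinal.aleph0.{u+1} ≤ Cardinal.lift.{u+1} δ.card := by
          simpa using (Cardinal.lift_le.{u+1}.mpr hδi.1.1.le)
        simpa using this
      · exact lt_of_lt_of_le q₀.small
          (Cardinal.lift_le.mpr (Ordinal.card_le_card hγδ))

/-- Fast function forcing factors below a condition: if `p ∈ F_μ` and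
`γ ∈ dom p`, then `p₀ = p ↾ γ ∈ F_γ`, `p₁ = p ↾ [γ,μ) ∈ F_{[γ,μ)}`, and the cone
`F_μ / p` is order-isomorphic to `(F_γ / p₀) × (F_{[γ,μ)} / p₁)` via restriction. -/
theorem fastFunction_factors (μ : Cardinal.{u}) (hμ : μ.IsInaccessible)
    (p : FFCond (Set.Iio μ.ord) μ.ord μ) (γ : Ordinal.{u}) (hγ : p.toFun γ ≠ none) :
    ∃ (p₀ : FFCond (Set.Iio γ) γ γ.card) (p₁ : FFCond (Set.Ico γ μ.ord) μ.ord μ),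
      p₀.toFun = restrictLT p.toFun γ ∧ p₁.toFun = restrictGE p.toFun γ ∧
      ∃ e : {r : FFCond (Set.Iio μ.ord) μ.ord μ // r ≤ p} ≃o
          ({r : FFCond (Set.Iio γ) γ γ.card // r ≤ p₀} ×
            {r : FFCond (Set.Ico γ μ.ord) μ.ord μ // r ≤ p₁}),
        ∀ r, ((e r).1.1.toFun = restrictLT r.1.toFun γ ∧
          (e r).2.1.toFun = restrictGE r.1.toFun γ) := by
  have hγμ : γ < μ.ord := p.dom_sub γ hγ
  have hγi : IsInaccOrd γ := p.dom_inacc γ hγ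
  obtain ⟨w, hw⟩ := Option.ne_none_iff_exists'.mp hγ
  refine ⟨FFCond.down μ p γ hγ, FFCond.up μ γ p, rfl, rfl, ?_⟩
  -- for r ≤ p, γ is in the domain of r
  have hrγ : ∀ r : FFCond (Set.Iio μ.ord) μ.ord μ, r ≤ p → r.toFun γ ≠ none := by
    intro r hr
    rw [hr γ w hw]; exact Option.some_ne_none w
  -- forward components are below p₀, p₁
  have hdown_le : ∀ (r : FFCond (Set.Iio μ.ord) μ.ord μ) (hr : r ≤ p),
      FFCond.down μ r γ (hrγ r hr) ≤ FFCond.down μ p γ hγ := by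
    intro r hr o v h
    obtain ⟨ho, h'⟩ := restrictLT_eq_some.mp h
    exact restrictLT_eq_some.mpr ⟨ho, hr o v h'⟩
  have hup_le : ∀ (r : FFCond (Set.Iio μ.ord) μ.ord μ) (hr : r ≤ p),
      FFCond.up μ γ r ≤ FFCond.up μ γ p := by
    intro r hr o v h
    obtain ⟨ho, h'⟩ := restrictGE_eq_some.mp h
    exact restrictGE_eq_some.mpr ⟨ho, hr o v h'⟩
  -- backward map lands below p
  have hjoin_le : ∀ (q₀ : FFCond (Set.Iio γ) γ γ.card)
      (q₁ : FFCond (Set.Ico γ μ.ord) μ.ord μ),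
      q₀ ≤ FFCond.down μ p γ hγ → q₁ ≤ FFCond.up μ γ p →
      FFCond.join μ hμ γ hγi hγμ q₀ q₁ ≤ p := by
    intro q₀ q₁ h₀ h₁ o v h
    show joinFun q₀.toFun q₁.toFun γ o = some v
    by_cases ho : o < γ
    · rw [joinFun_lt ho]
      exact h₀ o v (restrictLT_eq_some.mpr ⟨ho, h⟩)
    · rw [joinFun_ge (not_lt.mp ho)]
      exact h₁ o v (restrictGE_eq_some.mpr ⟨not_lt.mp ho, h⟩)
  set eqv : {r : FFCond (Set.Iio μ.ord) μ.ord μ // r ≤ p} ≃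
      ({r : FFCond (Set.Iio γ) γ γ.card // r ≤ FFCond.down μ p γ hγ} ×
        {r : FFCond (Set.Ico γ μ.ord) μ.ord μ // r ≤ FFCond.up μ γ p}) := {
    toFun := fun r => (⟨FFCond.down μ r.1 γ (hrγ r.1 r.2), hdown_le r.1 r.2⟩,
      ⟨FFCond.up μ γ r.1, hup_le r.1 r.2⟩)
    invFun := fun q => ⟨FFCond.join μ hμ γ hγi hγμ q.1.1 q.2.1,
      hjoin_le q.1.1 q.2.1 q.1.2 q.2.2⟩
    left_inv := by
      intro r
      refine Subtype.ext (FFCond.ext' (funext fun o => ?_))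
      show joinFun (restrictLT r.1.toFun γ) (restrictGE r.1.toFun γ) γ o = r.1.toFun o
      by_cases ho : o < γ
      · rw [joinFun_lt ho]; exact if_pos ho
      · rw [joinFun_ge (not_lt.mp ho)]; exact if_pos (not_lt.mp ho)
    right_inv := by
      intro q
      refine Prod.ext (Subtype.ext (FFCond.ext' (funext fun o => ?_)))
        (Subtype.ext (FFCond.ext' (funext fun o => ?_)))
      · show restrictLT (joinFun q.1.1.toFun q.2.1.toFun γ) γ o = q.1.1.toFun o
        by_cases ho : o < γ
        · rw [show restrictLT (joinFun q.1.1.toFun q.2.1.toFun γ) γ o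
            = joinFun q.1.1.toFun q.2.1.toFun γ o from if_pos ho, joinFun_lt ho]
        · rw [show restrictLT (joinFun q.1.1.toFun q.2.1.toFun γ) γ o = none from if_neg ho]
          by_contra h
          exact ho (q.1.1.dom_sub o fun hn => h hn.symm)
      · show restrictGE (joinFun q.1.1.toFun q.2.1.toFun γ) γ o = q.2.1.toFun o
        by_cases ho : γ ≤ o
        · rw [show restrictGE (joinFun q.1.1.toFun q.2.1.toFun γ) γ o
            = joinFun q.1.1.toFun q.2.1.toFun γ o from if_pos ho, joinFun_ge ho]
        · rw [show restrictGE (joinFun q.1.1.toFun q.2.1.toFun γ) γ o = none from if_neg ho]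
          by_contra h
          exact ho (q.2.1.dom_sub o fun hn => h hn.symm).1 }
  refine ⟨{ toEquiv := eqv, map_rel_iff' := ?_ }, fun r => ⟨rfl, rfl⟩⟩
  intro r s
  constructor
  · rintro ⟨h0, h1⟩ o v hs
    by_cases ho : o < γ
    · have := h0 o v (restrictLT_eq_some.mpr ⟨ho, hs⟩)
      exact (restrictLT_eq_some.mp this).2
    · have := h1 o v (restrictGE_eq_some.mpr ⟨not_lt.mp ho, hs⟩)
      exact (restrictGE_eq_some.mp this).2
  · intro h
    constructor
    · intro o v hs
      obtain ⟨ho, hs'⟩ := restrictLT_eq_some.mp hs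
      exact restrictLT_eq_some.mpr ⟨ho, h o v hs'⟩
    · intro o v hs
      obtain ⟨ho, hs'⟩ := restrictGE_eq_some.mp hs
      exact restrictGE_eq_some.mpr ⟨ho, h o v hs'⟩
end
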